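/- If Z_1, Z_2, ... are i.i.d. copies of a random n-vector Z with nonsingular covariance matrix, then almost surely the sequence {Z_i} contains n vectors that are linearly independent (i.e., almost surely there exist indices i_1 < ... < i_n such that Z_{i_1},...,Z_{i_n} span R^n). -/

import Mathlib

open MeasureTheory ProbabilityTheory Filter

section Auxiliary
open Set
open MeasureTheory ProbabilityTheory Filter Set

/-- Joint law of finitely many of the independent variables is the product of marginals. -/
lemma aux_map_tuple_eq_pi {Ω : Type*} {mΩ : MeasurableSpace Ω} {μ : Measure Ω}
    [IsProbabilityMeasure μ]
    {n : ℕ} (Z : ℕ → Ω → (Fin n → ℝ)) (hZm : ∀ i, Measurable (Z i))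
    (hindep : iIndepFun Z μ)
    {k : ℕ} (g : Fin k → ℕ) (hg : Function.Injective g) :
    μ.map (fun ω (j : Fin k) => Z (g j) ω)
      = Measure.pi (fun j => μ.map (Z (g j))) := by
  classical
  have hmapP : ∀ i, IsProbabilityMeasure (μ.map (Z i)) :=
    fun i => Measure.isProbabilityMeasure_map (hZm i).aemeasurable
  refine (Measure.pi_eq (fun s hs => ?_)).symm
  have hT : Measurable (fun ω (j : Fin k) => Z (g j) ω) :=
    measurable_pi_lambda _ (fun j => hZm (g j))
  rw [Measure.map_apply hT (MeasurableSet.univ_pi hs)]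
  have hpre : (fun ω (j : Fin k) => Z (g j) ω) ⁻¹' (Set.pi Set.univ s)
      = ⋂ j : Fin k, Z (g j) ⁻¹' s j := by
    ext ω; simp [Set.mem_univ_pi]
  rw [hpre]
  -- auxiliary family of sets
  set s' : ℕ → Set Ω := fun i =>
    if h : ∃ j, g j = i then Z i ⁻¹' s h.choose else Set.univ with hs'
  have hsg : ∀ j : Fin k, s' (g j) = Z (g j) ⁻¹' s j := by
    intro j
    have h : ∃ j', g j' = g j := ⟨j, rfl⟩
    have : h.choose = j := hg h.choose_spec
    simp [hs', dif_pos h, this]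
  have key := hindep.meas_biInter (S := Finset.univ.image g) (s := s') ?_
  · have h1 : (⋂ i ∈ Finset.univ.image g, s' i) = ⋂ j : Fin k, Z (g j) ⁻¹' s j := by
      rw [Finset.set_biInter_finset_image]
      simp [hsg]
    have h2 : (∏ i ∈ Finset.univ.image g, μ (s' i))
        = ∏ j : Fin k, (μ.map (Z (g j))) (s j) := by
      rw [Finset.prod_image (fun a _ b _ hab => hg hab)]
      refine Finset.prod_congr rfl (fun j _ => ?_)
      rw [hsg, Measure.map_apply (hZm (g j)) (hs j)]
    rw [h1, h2] at key
    exact key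
  · intro i hi
    rcases Finset.mem_image.1 hi with ⟨j, -, rfl⟩
    exact ⟨s (Exists.choose (⟨j, rfl⟩ : ∃ j', g j' = g j)),
      hs _, by simp [hs', dif_pos (⟨j, rfl⟩ : ∃ j', g j' = g j)]⟩


lemma aux_pi_li_pos {n : ℕ} (ν : Measure (Fin n → ℝ)) [IsProbabilityMeasure ν]
    (hν : ∀ V : Submodule ℝ (Fin n → ℝ), V ≠ ⊤ → ν ↑V < 1) :
    ∀ k, k ≤ n →
      0 < Measure.pi (fun _ : Fin k => ν) {f | LinearIndependent ℝ f} := by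
  have hLmeas : ∀ m : ℕ,
      MeasurableSet {f : Fin m → (Fin n → ℝ) | LinearIndependent ℝ f} :=
    fun m => isOpen_setOf_linearIndependent.measurableSet
  intro k
  induction k with
  | zero =>
    intro _
    have : {f : Fin 0 → (Fin n → ℝ) | LinearIndependent ℝ f} = Set.univ := by
      ext f; simp [linearIndependent_empty_type]
    rw [this]
    simp
  | succ k ih =>
    intro hk
    have hkn : k < n := hk
    have hπ : 0 < Measure.pi (fun _ : Fin k => ν) {f | LinearIndependent ℝ f} :=
      ih hkn.le
    set π := Measure.pi (fun _ : Fin k => ν) with hπdef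
    -- the cons map is measurable
    have hcons : Measurable fun p : (Fin n → ℝ) × (Fin k → (Fin n → ℝ)) =>
        (Fin.cons p.1 p.2 : Fin (k+1) → (Fin n → ℝ)) := by
      refine measurable_pi_lambda _ (fun j => ?_)
      refine Fin.cases ?_ ?_ j
      · simpa using measurable_fst
      · intro i
        simpa [Function.comp_def] using (measurable_pi_apply i).comp measurable_snd
    set B : Set ((Fin n → ℝ) × (Fin k → (Fin n → ℝ))) :=
      (fun p : (Fin n → ℝ) × (Fin k → (Fin n → ℝ)) => (Fin.cons p.1 p.2 : Fin (k+1) → (Fin n → ℝ)))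
        ⁻¹' {f | LinearIndependent ℝ f} with hBdef
    have hB : MeasurableSet B := hcons (hLmeas (k+1))
    have hmp := measurePreserving_piFinSuccAbove (fun _ : Fin (k+1) => ν) 0
    have hpre : (MeasurableEquiv.piFinSuccAbove (fun _ : Fin (k+1) => (Fin n → ℝ)) 0) ⁻¹' B
        = {f : Fin (k+1) → (Fin n → ℝ) | LinearIndependent ℝ f} := by
      ext f
      have : (Fin.cons (f 0) (fun j => f ((0 : Fin (k+1)).succAbove j)) : Fin (k+1) → (Fin n → ℝ))
          = f := by
        simp only [Fin.succAbove_zero]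
        exact Fin.cons_self_tail f
      simp only [MeasurableEquiv.piFinSuccAbove, MeasurableEquiv.coe_mk, Set.mem_preimage,
        hBdef, Set.mem_setOf_eq]
      show LinearIndependent ℝ (Fin.cons (f 0) (fun j => f ((0 : Fin (k+1)).succAbove j))
          : Fin (k+1) → (Fin n → ℝ)) ↔ _
      rw [this]
    have hmeas_eq : Measure.pi (fun _ : Fin (k+1) => ν)
        {f : Fin (k+1) → (Fin n → ℝ) | LinearIndependent ℝ f} = (ν.prod π) B := by
      rw [← hpre]
      exact hmp.measure_preimage hB.nullMeasurableSet
    rw [hmeas_eq, Measure.prod_apply_symm hB]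
    -- positivity of the integral
    rw [lintegral_pos_iff_support (measurable_measure_prodMk_right hB)]
    refine lt_of_lt_of_le hπ (measure_mono ?_)
    intro g hg
    simp only [Set.mem_setOf_eq] at hg
    have hslice : ((fun x => (x, g)) ⁻¹' B)
        = (↑(Submodule.span ℝ (Set.range g)))ᶜ := by
      ext x
      simp [hBdef, linearIndependent_fin_cons, hg]
    have hspan_ne : Submodule.span ℝ (Set.range g) ≠ ⊤ := by
      intro htop
      have hb : Nonempty (Module.Basis (Fin k) ℝ (Fin n → ℝ)) := ⟨Module.Basis.mk hg htop.ge⟩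
      have := Module.finrank_eq_card_basis hb.some
      rw [Module.finrank_fin_fun] at this
      simp only [Fintype.card_fin] at this
      omega
    have hlt := hν _ hspan_ne
    have hVmeas : MeasurableSet (↑(Submodule.span ℝ (Set.range g)) : Set (Fin n → ℝ)) :=
      (Submodule.closed_of_finiteDimensional _).measurableSet
    have : 0 < ν ((fun x => (x, g)) ⁻¹' B) := by
      rw [hslice, measure_compl hVmeas (measure_ne_top _ _), measure_univ]
      exact tsub_pos_of_lt hlt
    exact this.ne'


lemma aux_submodule_lt_one {Ω : Type*} {mΩ : MeasurableSpace Ω} {μ : Measure Ω}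
    [IsProbabilityMeasure μ] {n : ℕ} (X : Ω → (Fin n → ℝ)) (hXm : Measurable X)
    (hL2 : Integrable (fun ω => ‖X ω‖^2) μ)
    (hcov : ∀ l : Fin n → ℝ, l ≠ 0 →
      0 < ∫ ω, (∑ k, l k * (X ω k - ∫ ω', X ω' k ∂μ))^2 ∂μ)
    (V : Submodule ℝ (Fin n → ℝ)) (hV : V ≠ ⊤) :
    (μ.map X) ↑V < 1 := by
  have hVmeas : MeasurableSet (V : Set (Fin n → ℝ)) :=
    (Submodule.closed_of_finiteDimensional _).measurableSet
  by_contra hge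
  push_neg at hge
  have hmapP : IsProbabilityMeasure (μ.map X) := Measure.isProbabilityMeasure_map hXm.aemeasurable
  have h1 : (μ.map X) ↑V = 1 := le_antisymm prob_le_one hge
  rw [Measure.map_apply hXm hVmeas] at h1
  have hae : ∀ᵐ ω ∂μ, X ω ∈ V := by
    rw [ae_iff]
    have : {ω | ¬ X ω ∈ V} = (X ⁻¹' ↑V)ᶜ := rfl
    rw [this, measure_compl (hXm hVmeas) (measure_ne_top _ _), measure_univ, h1, tsub_self]
  -- find a functional vanishing on V
  obtain ⟨φ, hφ0, hφker⟩ := V.exists_le_ker_of_lt_top (hV.lt_top)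
  set l : Fin n → ℝ := fun i => φ (fun j => if i = j then 1 else 0) with hl
  have hφeq : ∀ x, φ x = ∑ i, x i * l i := by
    intro x
    rw [LinearMap.pi_apply_eq_sum_univ φ x]
    simp [hl, smul_eq_mul]
  have hl0 : l ≠ 0 := by
    intro h
    apply hφ0
    refine LinearMap.ext fun x => ?_
    rw [hφeq]
    simp [h]
  -- integrability of coordinates
  have hint : ∀ i : Fin n, Integrable (fun ω => X ω i) μ := by
    intro i
    have hbound : Integrable (fun ω => 1 + ‖X ω‖^2) μ := (integrable_const 1).add hL2
    refine hbound.mono (((measurable_pi_apply i).comp hXm).aestronglyMeasurable) (ae_of_all _ fun ω => ?_)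
    have h1 : |X ω i| ≤ ‖X ω‖ := by
      simpa using norm_le_pi_norm (X ω) i
    have h2 : ‖X ω‖ ≤ 1 + ‖X ω‖^2 := by nlinarith [norm_nonneg (X ω)]
    have h3 : (0:ℝ) ≤ 1 + ‖X ω‖^2 := by positivity
    simp only [Real.norm_eq_abs]
    rw [abs_of_nonneg h3]
    exact h1.trans h2
  set m : Fin n → ℝ := fun i => ∫ ω', X ω' i ∂μ with hm
  -- the centered linear combination
  have haeC : ∀ᵐ ω ∂μ, (∑ k, l k * (X ω k - m k)) = - ∑ k, l k * m k := by
    filter_upwards [hae] with ω hω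
    have hφx : ∑ k, X ω k * l k = 0 := by
      rw [← hφeq]; exact hφker hω
    have : ∑ k, l k * (X ω k - m k) = ∑ k, X ω k * l k - ∑ k, l k * m k := by
      rw [← Finset.sum_sub_distrib]
      congr 1 with k
      ring
    rw [this, hφx]; ring
  -- the integral of the centered combination is zero
  have hint_term : ∀ k : Fin n, Integrable (fun ω => l k * (X ω k - m k)) μ :=
    fun k => (((hint k).sub (integrable_const (m k))).const_mul (l k))
  have hInt0 : ∫ ω, (∑ k, l k * (X ω k - m k)) ∂μ = 0 := by
    rw [integral_finset_sum _ (fun k _ => hint_term k)]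
    refine Finset.sum_eq_zero (fun k _ => ?_)
    rw [integral_const_mul, integral_sub (hint k) (integrable_const (m k)), integral_const]
    simp [hm]
  have hC0 : (∑ k, l k * m k) = 0 := by
    have := integral_congr_ae haeC
    rw [hInt0, integral_const] at this
    simp only [probReal_univ, one_smul] at this
    linarith
  -- hence the variance integrand vanishes a.e.
  have haeZ : ∀ᵐ ω ∂μ, (∑ k, l k * (X ω k - m k))^2 = 0 := by
    filter_upwards [haeC] with ω hω
    rw [hω, hC0]
    simp
  have : ∫ ω, (∑ k, l k * (X ω k - m k))^2 ∂μ = 0 := by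
    rw [integral_congr_ae haeZ]
    simp
  have hpos := hcov l hl0
  linarith

end Auxiliary

open scoped BigOperators
open Set in
/-- If `Z_1, Z_2, …` are i.i.d. copies of a random `n`-vector with nonsingular
covariance matrix, then almost surely the sequence contains `n` linearly
independent vectors (Lemma A.2). -/
theorem stmt_4
    {Ω : Type*} {mΩ : MeasurableSpace Ω} {μ : Measure Ω} [IsProbabilityMeasure μ]
    {n : ℕ} (Z : ℕ → Ω → (Fin n → ℝ)) (hZm : ∀ i, Measurable (Z i))
    -- independent and identically distributed
    (hindep : iIndepFun Z μ)
    (hident : ∀ i, IdentDistrib (Z i) (Z 0) μ μ)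
    -- finite second moments
    (hL2 : Integrable (fun ω => ‖Z 0 ω‖^2) μ)
    -- nonsingular covariance matrix: every nonzero linear combination has positive variance
    (hcov : ∀ l : Fin n → ℝ, l ≠ 0 →
      0 < ∫ ω, (∑ k, l k * (Z 0 ω k - ∫ ω', Z 0 ω' k ∂μ))^2 ∂μ) :
    ∀ᵐ ω ∂μ, ∃ ι : Fin n → ℕ, StrictMono ι ∧
      LinearIndependent ℝ (fun j => Z (ι j) ω) := by
  classical
  set ν := μ.map (Z 0) with hνdef
  have hνP : IsProbabilityMeasure ν := Measure.isProbabilityMeasure_map (hZm 0).aemeasurable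
  have hνlt : ∀ V : Submodule ℝ (Fin n → ℝ), V ≠ ⊤ → ν ↑V < 1 :=
    fun V hV => aux_submodule_lt_one (Z 0) (hZm 0) hL2 hcov V hV
  set L := {f : Fin n → (Fin n → ℝ) | LinearIndependent ℝ f} with hLdef
  have hLmeas : MeasurableSet L := isOpen_setOf_linearIndependent.measurableSet
  set c := Measure.pi (fun _ : Fin n => ν) L with hcdef
  have hcpos : 0 < c := aux_pi_li_pos ν hνlt n le_rfl
  have hcle : c ≤ 1 := prob_le_one
  -- the blocks
  set T : ℕ → Ω → (Fin n → (Fin n → ℝ)) := fun m ω j => Z (n*m + j) ω with hTdef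
  have hTmeas : ∀ m, Measurable (T m) := fun m => measurable_pi_lambda _ (fun j => hZm _)
  have hginj : ∀ m : ℕ, Function.Injective (fun j : Fin n => n*m + (j : ℕ)) := by
    intro m a b hab
    simp only at hab
    exact Fin.ext (by omega)
  have hmap : ∀ m, μ.map (T m) = Measure.pi (fun _ : Fin n => ν) := by
    intro m
    rw [hTdef]
    rw [aux_map_tuple_eq_pi Z hZm hindep _ (hginj m)]
    exact congrArg Measure.pi (funext fun j => (hident _).map_eq)
  set s : ℕ → Set Ω := fun m => T m ⁻¹' L with hsdef
  have hsmeas : ∀ m, MeasurableSet (s m) := fun m => hTmeas m hLmeas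
  have hμs : ∀ m, μ (s m) = c := by
    intro m
    rw [hsdef]
    simp only
    rw [← Measure.map_apply (hTmeas m) hLmeas, hmap m]
  have hμsc : ∀ m, μ (s m)ᶜ = 1 - c := by
    intro m
    rw [measure_compl (hsmeas m) (measure_ne_top _ _), measure_univ, hμs m]
  -- geometric decay of the intersection of complements
  have hbound : ∀ M : ℕ, μ (⋂ m ∈ Finset.range M, (s m)ᶜ) ≤ (1 - c)^M := by
    intro M
    induction M with
    | zero => simp
    | succ M ihM =>
      have hST : Disjoint (Finset.range (n*M)) (Finset.Ico (n*M) (n*M+n)) := by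
        rw [Finset.disjoint_left]
        intro a ha hb
        rw [Finset.mem_range] at ha
        rw [Finset.mem_Ico] at hb
        omega
      have hIF := hindep.indepFun_finset (Finset.range (n*M)) (Finset.Ico (n*M) (n*M+n)) hST hZm
      set X : Ω → ((Finset.range (n*M) : Finset ℕ) → (Fin n → ℝ)) := fun ω i => Z i ω with hX
      set Y : Ω → ((Finset.Ico (n*M) (n*M+n) : Finset ℕ) → (Fin n → ℝ)) := fun ω i => Z i ω
        with hY
      -- target sets
      set ψ : ((Finset.Ico (n*M) (n*M+n) : Finset ℕ) → (Fin n → ℝ)) → (Fin n → (Fin n → ℝ)) :=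
        fun v j => v ⟨n*M + j, by rw [Finset.mem_Ico]; omega⟩ with hψ
      have hψm : Measurable ψ := measurable_pi_lambda _ (fun j => measurable_pi_apply _)
      set SB : Set ((Finset.Ico (n*M) (n*M+n) : Finset ℕ) → (Fin n → ℝ)) := (ψ ⁻¹' L)ᶜ with hSB
      have hSBm : MeasurableSet SB := (hψm hLmeas).compl
      set C : ℕ → Set ((Finset.range (n*M) : Finset ℕ) → (Fin n → ℝ)) := fun m' =>
        if h : m' < M then
          ((fun v (j : Fin n) => v ⟨n*m' + j, by
            rw [Finset.mem_range]
            have h1 : (j:ℕ) < n := j.isLt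
            have h2 : n * (m'+1) ≤ n * M := Nat.mul_le_mul_left n h
            rw [Nat.mul_succ] at h2
            omega⟩) ⁻¹' L)ᶜ
        else Set.univ with hC
      have hCm : ∀ m', MeasurableSet (C m') := by
        intro m'
        simp only [hC]
        split
        · exact ((measurable_pi_lambda _ (fun j => measurable_pi_apply _)) hLmeas).compl
        · exact MeasurableSet.univ
      set SA : Set ((Finset.range (n*M) : Finset ℕ) → (Fin n → ℝ)) :=
        ⋂ m' ∈ Finset.range M, C m' with hSA
      have hSAm : MeasurableSet SA := by
        refine MeasurableSet.biInter (Finset.range M).countable_toSet (fun m' _ => hCm m')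
      -- identifications
      have hidA : (⋂ m ∈ Finset.range M, (s m)ᶜ) = X ⁻¹' SA := by
        rw [hSA, Set.preimage_iInter₂]
        refine Set.iInter₂_congr (fun m' hm' => ?_)
        rw [Finset.mem_range] at hm'
        have hCeq : C m' = ((fun v (j : Fin n) => v ⟨n*m' + j, by
            rw [Finset.mem_range]
            have h1 : (j:ℕ) < n := j.isLt
            have h2 : n * (m'+1) ≤ n * M := Nat.mul_le_mul_left n hm'
            rw [Nat.mul_succ] at h2
            omega⟩) ⁻¹' L)ᶜ := by
          simp only [hC]
          rw [dif_pos hm']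
        rw [hCeq]
        rfl
      have hidB : (s M)ᶜ = Y ⁻¹' SB := rfl
      have hfin : (⋂ m ∈ Finset.range (M+1), (s m)ᶜ)
          = X ⁻¹' SA ∩ Y ⁻¹' SB := by
        rw [Finset.range_add_one, Finset.set_biInter_insert, hidA, hidB, Set.inter_comm]
      rw [hfin, hIF.measure_inter_preimage_eq_mul _ _ hSAm hSBm, ← hidA, ← hidB, hμsc M,
        pow_succ]
      exact mul_le_mul' ihM le_rfl
  -- conclude the intersection of all complements is null
  have h0 : μ (⋂ m : ℕ, (s m)ᶜ) = 0 := by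
    have h1c : (1:ENNReal) - c < 1 :=
      ENNReal.sub_lt_self ENNReal.one_ne_top one_ne_zero hcpos.ne'
    have htend : Tendsto (fun M : ℕ => ((1:ENNReal) - c)^M) atTop (nhds 0) :=
      ENNReal.tendsto_pow_atTop_nhds_zero_of_lt_one h1c
    refine le_antisymm ?_ zero_le
    refine ge_of_tendsto' htend (fun M => ?_)
    refine le_trans (measure_mono ?_) (hbound M)
    intro ω hω
    simp only [Set.mem_iInter] at hω ⊢
    exact fun m _ => hω m
  have hae : ∀ᵐ ω ∂μ, ω ∈ ⋃ m, s m := by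
    rw [ae_iff]
    have : {ω | ¬ ω ∈ ⋃ m, s m} = ⋂ m, (s m)ᶜ := by ext ω; simp
    rw [this]
    exact h0
  filter_upwards [hae] with ω hω
  obtain ⟨m, hm⟩ := Set.mem_iUnion.1 hω
  refine ⟨fun j => n*m + j, ?_, hm⟩
  intro a b hab
  have : (a:ℕ) < b := hab
  simp only
  omega
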